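/- Let k ≥ 1 be an integer, let E : (0,∞) → ℝ be twice continuously differentiable, and let f, g : (0,∞) → ℝ be continuously differentiable, such that for all x > 0 with 2xE″(x) + E′(x) ≠ 0: (i) x f′(x) + k f(x) + (x g′(x) + (k−1) g(x))/(x(4E″(x)x + 2E′(x))) − f′(x)·x·(4E″(x)x + 4E′(x))/(4E″(x)x + 2E′(x)) = 0, and (ii) g′(x) − (4E″(x)x + 4E′(x))·(x g′(x) + (k−1) g(x))/(x(4E″(x)x + 2E′(x))) + f′(x)/(4E″(x)x + 2E′(x)) = 0. Let a, b : ℝ² → (0,∞) be continuously differentiable and suppose that, writing x = a·b pointwise, one has 2xE″(x) + E′(x) ≠ 0 everywhere and the derivative relations hold at every point of ℝ²: ∂₋b = (1/a)·(1/(2(2E″(x)x + E′(x))))·( ∂₊b − 4(E′(x) + E″(x)x)·b·∂₋a ) and ∂₊a = (1/b)·(1/(2(2E″(x)x + E′(x))))·( ∂₋a − 4(E′(x) + E″(x)x)·a·∂₊b ). Then ∂₋( f(ab)·aᵏ ) + ∂₊( g(ab)·a^{k−1} ) = 0 everywhere on ℝ². -/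

import Mathlib

/-- Light-cone partial derivative `∂₊` on the worldsheet `ℝ²`. -/
noncomputable def dplus (h : ℝ × ℝ → ℝ) (p : ℝ × ℝ) : ℝ := fderiv ℝ h p (1, 0)

/-- Light-cone partial derivative `∂₋` on the worldsheet `ℝ²`. -/
noncomputable def dminus (h : ℝ × ℝ → ℝ) (p : ℝ × ℝ) : ℝ := fderiv ℝ h p (0, 1)

/-- Derivative of `F(a·b)·aᵐ` in direction `v`. -/
lemma stmt8_fderiv (F : ℝ → ℝ) (a b : ℝ × ℝ → ℝ) (m : ℕ) (p : ℝ × ℝ) (v : ℝ × ℝ)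
    (ha : ContDiff ℝ 1 a) (hb : ContDiff ℝ 1 b)
    (hF : ContDiffOn ℝ 1 F (Set.Ioi 0)) (hx : 0 < a p * b p) :
    fderiv ℝ (fun q => F (a q * b q) * a q ^ m) p v =
      F (a p * b p) * ((m : ℝ) * a p ^ (m-1) * fderiv ℝ a p v)
      + a p ^ m * (deriv F (a p * b p) *
          (a p * fderiv ℝ b p v + b p * fderiv ℝ a p v)) := by
  have hda : HasFDerivAt a (fderiv ℝ a p) p := (ha.differentiable one_ne_zero p).hasFDerivAt
  have hdb : HasFDerivAt b (fderiv ℝ b p) p := (hb.differentiable one_ne_zero p).hasFDerivAt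
  have hab : HasFDerivAt (fun q => a q * b q)
      (a p • fderiv ℝ b p + b p • fderiv ℝ a p) p := hda.mul hdb
  have hdF : HasDerivAt F (deriv F (a p * b p)) (a p * b p) :=
    ((hF.differentiableOn one_ne_zero).differentiableAt (isOpen_Ioi.mem_nhds hx)).hasDerivAt
  have h1 : HasFDerivAt (fun q => F (a q * b q))
      (deriv F (a p * b p) • (a p • fderiv ℝ b p + b p • fderiv ℝ a p)) p :=
    hdF.comp_hasFDerivAt p hab
  have h2 : HasFDerivAt (fun q => a q ^ m)
      (((m : ℝ) * a p ^ (m-1)) • fderiv ℝ a p) p :=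
    (hasDerivAt_pow m (a p)).comp_hasFDerivAt p hda
  have h3 : HasFDerivAt (fun q => F (a q * b q) * a q ^ m) _ p := h1.mul h2
  rw [h3.fderiv]
  simp [smul_smul]
  ring

theorem stmt8 (k : ℕ) (hk : 1 ≤ k) (E f g : ℝ → ℝ)
    (hE : ContDiffOn ℝ 2 E (Set.Ioi 0))
    (hf : ContDiffOn ℝ 1 f (Set.Ioi 0)) (hg : ContDiffOn ℝ 1 g (Set.Ioi 0))
    (hode : ∀ x > (0 : ℝ), 2 * x * deriv (deriv E) x + deriv E x ≠ 0 →
      (x * deriv f x + (k : ℝ) * f x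
          + (x * deriv g x + ((k : ℝ) - 1) * g x)
              / (x * (4 * deriv (deriv E) x * x + 2 * deriv E x))
          - deriv f x * x * (4 * deriv (deriv E) x * x + 4 * deriv E x)
              / (4 * deriv (deriv E) x * x + 2 * deriv E x) = 0) ∧
      (deriv g x
          - (4 * deriv (deriv E) x * x + 4 * deriv E x)
              * (x * deriv g x + ((k : ℝ) - 1) * g x)
              / (x * (4 * deriv (deriv E) x * x + 2 * deriv E x))
          + deriv f x / (4 * deriv (deriv E) x * x + 2 * deriv E x) = 0))
    (a b : ℝ × ℝ → ℝ)
    (ha : ContDiff ℝ 1 a) (hb : ContDiff ℝ 1 b)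
    (hapos : ∀ p : ℝ × ℝ, 0 < a p) (hbpos : ∀ p : ℝ × ℝ, 0 < b p)
    (hne : ∀ p : ℝ × ℝ,
      2 * (a p * b p) * deriv (deriv E) (a p * b p) + deriv E (a p * b p) ≠ 0)
    (hrel1 : ∀ p : ℝ × ℝ,
      dminus b p =
        (1 / a p) *
          (1 / (2 * (2 * deriv (deriv E) (a p * b p) * (a p * b p)
              + deriv E (a p * b p)))) *
          (dplus b p
            - 4 * (deriv E (a p * b p)
                + deriv (deriv E) (a p * b p) * (a p * b p)) * b p * dminus a p))
    (hrel2 : ∀ p : ℝ × ℝ,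
      dplus a p =
        (1 / b p) *
          (1 / (2 * (2 * deriv (deriv E) (a p * b p) * (a p * b p)
              + deriv E (a p * b p)))) *
          (dminus a p
            - 4 * (deriv E (a p * b p)
                + deriv (deriv E) (a p * b p) * (a p * b p)) * a p * dplus b p)) :
    ∀ p : ℝ × ℝ,
      dminus (fun q => f (a q * b q) * a q ^ k) p
        + dplus (fun q => g (a q * b q) * a q ^ (k - 1)) p = 0 := by
  intro p
  have ha0 : a p ≠ 0 := ne_of_gt (hapos p)
  have hb0 : b p ≠ 0 := ne_of_gt (hbpos p)
  have hxpos : 0 < a p * b p := mul_pos (hapos p) (hbpos p)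
  have hx0 : a p * b p ≠ 0 := ne_of_gt hxpos
  obtain ⟨hi, hii⟩ := hode (a p * b p) hxpos (hne p)
  have hr1 := hrel1 p
  have hr2 := hrel2 p
  have e1 := stmt8_fderiv f a b k p (0, 1) ha hb hf hxpos
  have e2 := stmt8_fderiv g a b (k - 1) p (1, 0) ha hb hg hxpos
  rw [dminus, dplus, e1, e2]
  -- notation
  set x := a p * b p with hxdef
  set D1 := deriv E x with hD1
  set D2 := deriv (deriv E) x with hD2
  set fp := deriv f x with hfp
  set gp := deriv g x with hgp
  set Am := fderiv ℝ a p (0, 1) with hAm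
  set Bm := fderiv ℝ b p (0, 1) with hBm
  set Ap := fderiv ℝ a p (1, 0) with hAp
  set Bp := fderiv ℝ b p (1, 0) with hBp
  simp only [dminus, dplus, ← hAm, ← hBm, ← hAp, ← hBp] at hr1 hr2
  have hc : 2 * x * D2 + D1 ≠ 0 := hne p
  have hc2 : (2 * (2 * D2 * x + D1)) ≠ 0 := by
    intro h; apply hc; linarith
  -- cleared relations
  have hr1' : 2 * (2 * D2 * x + D1) * (a p * Bm)
      = Bp - 4 * (D1 + D2 * x) * b p * Am := by
    have hc' : 2 * D2 * x + D1 ≠ 0 := by intro h; apply hc; linarith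
    rw [hr1]; field_simp
  have hr2' : 2 * (2 * D2 * x + D1) * (b p * Ap)
      = Am - 4 * (D1 + D2 * x) * a p * Bp := by
    have hc' : 2 * D2 * x + D1 ≠ 0 := by intro h; apply hc; linarith
    rw [hr2]; field_simp
  -- cleared ODE conditions
  have hc4 : (4 * D2 * x + 2 * D1) ≠ 0 := by intro h; apply hc; linarith
  have hi' : 2 * x ^ 2 * (2 * x * D2 + D1) * fp + 2 * x * (2 * x * D2 + D1) * (k : ℝ) * f x
      + x * gp + ((k : ℝ) - 1) * g x - x ^ 2 * (4 * D2 * x + 4 * D1) * fp = 0 := by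
    have h := hi
    have e1 : (x * gp + ((k : ℝ) - 1) * g x) / (x * (4 * D2 * x + 2 * D1)) * (x * (4 * D2 * x + 2 * D1)) = (x * gp + ((k : ℝ) - 1) * g x) := div_mul_cancel₀ _ (mul_ne_zero hx0 hc4)
    have e2 : fp * x * (4 * D2 * x + 4 * D1) / (4 * D2 * x + 2 * D1) * (4 * D2 * x + 2 * D1) = fp * x * (4 * D2 * x + 4 * D1) := div_mul_cancel₀ _ hc4
    have h2 : (4 * D2 * x + 2 * D1) *
        (2 * x ^ 2 * (2 * x * D2 + D1) * fp + 2 * x * (2 * x * D2 + D1) * (k : ℝ) * f x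
          + x * gp + ((k : ℝ) - 1) * g x - x ^ 2 * (4 * D2 * x + 4 * D1) * fp) = 0 := by
      linear_combination (x * (4 * D2 * x + 2 * D1) ^ 2) * h - (4 * D2 * x + 2 * D1) * e1 + (x * (4 * D2 * x + 2 * D1)) * e2
    exact (mul_eq_zero.mp h2).resolve_left hc4
  have hii' : 2 * x * (2 * x * D2 + D1) * gp
      - (4 * D2 * x + 4 * D1) * (x * gp + ((k : ℝ) - 1) * g x) + x * fp = 0 := by
    have h := hii
    have e1 : (4 * D2 * x + 4 * D1) * (x * gp + ((k : ℝ) - 1) * g x) / (x * (4 * D2 * x + 2 * D1)) * (x * (4 * D2 * x + 2 * D1)) = (4 * D2 * x + 4 * D1) * (x * gp + ((k : ℝ) - 1) * g x) := div_mul_cancel₀ _ (mul_ne_zero hx0 hc4)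
    have e2 : fp / (4 * D2 * x + 2 * D1) * (4 * D2 * x + 2 * D1) = fp := div_mul_cancel₀ _ hc4
    have h2 : (4 * D2 * x + 2 * D1) *
        (2 * x * (2 * x * D2 + D1) * gp
          - (4 * D2 * x + 4 * D1) * (x * gp + ((k : ℝ) - 1) * g x) + x * fp) = 0 := by
      linear_combination (x * (4 * D2 * x + 2 * D1) ^ 2) * h + (4 * D2 * x + 2 * D1) * e1 - (x * (4 * D2 * x + 2 * D1)) * e2
    exact (mul_eq_zero.mp h2).resolve_left hc4
  -- powers
  have hw : a p ^ k = a p * a p ^ (k - 1) := by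
    conv_lhs => rw [show k = (k - 1) + 1 from (Nat.succ_pred_eq_of_pos hk).symm]
    rw [pow_succ]; ring
  have hv : ((k - 1 : ℕ) : ℝ) * a p ^ (k - 1 - 1) * a p = ((k : ℝ) - 1) * a p ^ (k - 1) := by
    match k, hk with
    | 1, _ => norm_num
    | (n + 2), _ =>
      rw [show n + 2 - 1 = n + 1 from rfl, show n + 1 - 1 = n from rfl, pow_succ]
      push_cast
      ring
  rw [hw]
  set w := a p ^ (k - 1) with hwdef
  set v := a p ^ (k - 1 - 1) with hvdef
  -- main algebraic identity
  have main : (2 * (2 * D2 * x + D1) * a p * b p) *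
      (f x * ((k : ℝ) * w * Am) + a p * w * (fp * (a p * Bm + b p * Am))
        + (g x * (((k - 1 : ℕ) : ℝ) * v * Ap) + w * (gp * (a p * Bp + b p * Ap)))) = 0 := by
    linear_combination (w * Am) * hi' + (w * a p * Bp) * hii'
      + (b p * w * (a p) ^ 2 * fp) * hr1'
      + (w * (a p * b p * gp + ((k : ℝ) - 1) * g x)) * hr2'
      + (2 * (2 * D2 * x + D1) * b p * g x * Ap) * hv
  have hC : (2 * (2 * D2 * x + D1) * a p * b p) ≠ 0 :=
    mul_ne_zero (mul_ne_zero hc2 ha0) hb0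
  have := (mul_eq_zero.mp main).resolve_left hC
  linear_combination this
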